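/- Let (Z, h) be a Carrollian structure on M with compatible connection ∇ (∇Z = 0, ∇h = 0), and define Φ(T)(X,Y) = h(T(Z,X),Y) + h(T(Z,Y),X). Then Φ(T^∇) = £_Z h, i.e. for all vector fields X, Y: h(T^∇(Z,X),Y) + h(T^∇(Z,Y),X) = (£_Z h)(X,Y). -/

import Mathlib

/-- An abstract calculus of smooth differential forms on a smooth manifold:
`A` is the algebra of (mixed-degree) differential forms with wedge product
written `*`, `VF` is the space of smooth vector fields.  The structure
provides the exterior derivative `d`, interior product `iota`, Lie
derivative `lie`, Lie bracket of vector fields `bracket`, a Riemannian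
metric `met` with musical isomorphisms `flat`/`sharp`, and time
derivatives `Dt`/`DtV` of time-dependent forms and vector fields,
together with their standard axioms. -/
class FormCalculus (A : Type*) (VF : outParam (Type*)) [Ring A] [Algebra ℝ A]
    [AddCommGroup VF] where
  /-- `IsForm n a` : `a` is a homogeneous differential form of degree `n`. -/
  IsForm : ℕ → A → Prop
  /-- `NowhereZero n a` : `a` is a nowhere-vanishing `n`-form. -/
  NowhereZero : ℕ → A → Prop
  /-- nowhere-vanishing vector field -/
  NowhereZeroV : VF → Prop
  /-- (pointwise) positive smooth function, i.e. positive degree-0 form -/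
  Positive : A → Prop
  /-- exterior derivative -/
  d : A → A
  /-- interior product with a vector field -/
  iota : VF → A → A
  /-- Lie derivative along a vector field -/
  lie : VF → A → A
  /-- Lie bracket of vector fields -/
  bracket : VF → VF → VF
  /-- musical isomorphism `♭` induced by the Riemannian metric -/
  flat : VF → A
  /-- musical isomorphism `♯` induced by the Riemannian metric -/
  sharp : A → VF
  /-- the Riemannian metric `g(X,Y)`, a smooth function -/
  met : VF → VF → A
  /-- time derivative `∂/∂t` of a time-dependent form -/
  Dt : (ℝ → A) → ℝ → A
  /-- time derivative `∂/∂t` of a time-dependent vector field -/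
  DtV : (ℝ → VF) → ℝ → VF
  isForm_one : IsForm 0 1
  isForm_zero : ∀ n, IsForm n 0
  isForm_add : ∀ n a b, IsForm n a → IsForm n b → IsForm n (a + b)
  isForm_neg : ∀ n a, IsForm n a → IsForm n (-a)
  isForm_smul : ∀ n (r : ℝ) a, IsForm n a → IsForm n (r • a)
  isForm_mul : ∀ m n a b, IsForm m a → IsForm n b → IsForm (m + n) (a * b)
  isForm_d : ∀ n a, IsForm n a → IsForm (n + 1) (d a)
  d_add : ∀ a b, d (a + b) = d a + d b
  d_smul : ∀ (r : ℝ) a, d (r • a) = r • d a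
  d_d : ∀ a, d (d a) = 0
  d_mul : ∀ m a b, IsForm m a →
    d (a * b) = d a * b + ((-1 : ℝ) ^ m) • (a * d b)
  mul_graded_comm : ∀ m n a b, IsForm m a → IsForm n b →
    a * b = ((-1 : ℝ) ^ (m * n)) • (b * a)
  isForm_iota : ∀ (Z : VF) n a, IsForm (n + 1) a → IsForm n (iota Z a)
  iota_form0 : ∀ (Z : VF) a, IsForm 0 a → iota Z a = 0
  iota_add : ∀ (Z : VF) a b, iota Z (a + b) = iota Z a + iota Z b
  iota_smul : ∀ (Z : VF) (r : ℝ) a, iota Z (r • a) = r • iota Z a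
  iota_addV : ∀ (Z W : VF) a, iota (Z + W) a = iota Z a + iota W a
  iota_negV : ∀ (Z : VF) a, iota (-Z) a = -(iota Z a)
  iota_mul : ∀ (Z : VF) m a b, IsForm m a →
    iota Z (a * b) = iota Z a * b + ((-1 : ℝ) ^ m) • (a * iota Z b)
  iota_iota : ∀ (Z : VF) a, iota Z (iota Z a) = 0
  /-- Cartan's magic formula `£_Z = ι_Z ∘ d + d ∘ ι_Z`. -/
  cartan : ∀ (Z : VF) a, lie Z a = iota Z (d a) + d (iota Z a)
  isForm_lie : ∀ (Z : VF) n a, IsForm n a → IsForm n (lie Z a)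
  lie_add : ∀ (Z : VF) a b, lie Z (a + b) = lie Z a + lie Z b
  lie_mul : ∀ (Z : VF) a b, lie Z (a * b) = lie Z a * b + a * lie Z b
  lie_d : ∀ (Z : VF) a, lie Z (d a) = d (lie Z a)
  isForm_flat : ∀ X : VF, IsForm 1 (flat X)
  flat_add : ∀ X Y : VF, flat (X + Y) = flat X + flat Y
  sharp_flat : ∀ X : VF, sharp (flat X) = X
  flat_sharp : ∀ a, IsForm 1 a → flat (sharp a) = a
  iota_flat : ∀ X Y : VF, iota X (flat Y) = met X Y
  met_symm : ∀ X Y : VF, met X Y = met Y X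
  isForm_met : ∀ X Y : VF, IsForm 0 (met X Y)
  Dt_add : ∀ (c c' : ℝ → A) t, Dt (fun s => c s + c' s) t = Dt c t + Dt c' t
  Dt_d : ∀ (c : ℝ → A) t, Dt (fun s => d (c s)) t = d (Dt c t)
  Dt_const : ∀ (a : A) (t : ℝ), Dt (fun _ => a) t = 0
  Dt_mul : ∀ (c c' : ℝ → A) t,
    Dt (fun s => c s * c' s) t = Dt c t * c' t + c t * Dt c' t
  Dt_flat : ∀ (w : ℝ → VF) t, Dt (fun s => flat (w s)) t = flat (DtV w t)

namespace FormCalculus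

variable {A : Type*} {VF : Type*} [Ring A] [Algebra ℝ A] [AddCommGroup VF]
  [FormCalculus A VF]

/-- Let `(Z, h)` be a Carrollian structure (`Z` a
nowhere-vanishing vector field, `h` a symmetric (0,2)-tensor with
`ι_Z h = 0`) with compatible connection `∇` (`∇Z = 0`, `∇h = 0`).
Then `Φ(T^∇) = £_Z h`, i.e. for all vector fields `X, Y`:
`h(T^∇(Z,X),Y) + h(T^∇(Z,Y),X) = (£_Z h)(X,Y)`. -/
theorem carroll_Phi_torsion_eq_lie_h (Z : VF) (h : VF → VF → A)
    (hZnz : NowhereZeroV (A := A) Z)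
    (hform : ∀ X Y : VF, IsForm 0 (h X Y))
    (hsymm : ∀ X Y : VF, h X Y = h Y X)
    (hker : ∀ X : VF, h Z X = 0)
    (haddl : ∀ X X' Y : VF, h (X + X') Y = h X Y + h X' Y)
    (haddr : ∀ X Y Y' : VF, h X (Y + Y') = h X Y + h X Y')
    (hnegl : ∀ X Y : VF, h (-X) Y = -(h X Y))
    (nabla : VF → VF → VF)
    (hnablaZ : ∀ X : VF, nabla X Z = 0)
    (hnablah : ∀ X Y W : VF,
      lie X (h Y W) = h (nabla X Y) W + h Y (nabla X W)) :
    ∀ X Y : VF,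
      h (nabla Z X - nabla X Z - bracket (A := A) Z X) Y +
        h (nabla Z Y - nabla Y Z - bracket (A := A) Z Y) X =
      lie Z (h X Y) - h (bracket (A := A) Z X) Y - h X (bracket (A := A) Z Y) := by
  intro X Y
  have hsub : ∀ a b c : VF, h (a - b) c = h a c - h b c := by
    intro a b c
    rw [sub_eq_add_neg, haddl, hnegl, sub_eq_add_neg]
  have h0 : ∀ c : VF, h 0 c = 0 := by
    intro c
    have := haddl 0 0 c
    rw [add_zero] at this
    exact left_eq_add.mp this
  rw [hsub, hsub, hsub, hsub, hnablaZ, hnablaZ, h0, h0, hnablah Z X Y,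
    hsymm X (bracket (A := A) Z Y), hsymm (nabla Z Y) X]
  abel

end FormCalculus
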